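/- There exists a unique vector w ∈ ℝ^n with w_j > 0 for all j = 1,…,n such that w lies in the row span of A (i.e. w = Aᵀu for some u ∈ ℝ^m) and A(1/w) = b, where (1/w)_j := 1/w_j. Equivalently, w is the unique positive vector in the row span of A for which the mean vector (1/w_1,…,1/w_n) of the product-exponential measure P_{n,w} lies in K_n. -/

import Mathlib

open Matrix Filter

private lemma barycenter_uniq {m n : ℕ}
    (A : Matrix (Fin m) (Fin n) ℝ) (b : Fin m → ℝ)
    (w w' : Fin n → ℝ) (hw : ∀ j, 0 < w j) (hw' : ∀ j, 0 < w' j)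
    (u u' : Fin m → ℝ) (hu : w = A.transpose.mulVec u) (hu' : w' = A.transpose.mulVec u')
    (hb : A.mulVec (fun j => (w j)⁻¹) = b) (hb' : A.mulVec (fun j => (w' j)⁻¹) = b) :
    w = w' := by
  have key : ∑ j, (w j - w' j) * ((w' j)⁻¹ - (w j)⁻¹) = 0 := by
    have h1 : (fun j => w j - w' j) = A.transpose.mulVec (u - u') := by
      rw [hu, hu', Matrix.mulVec_sub]; rfl
    have h2 : ∑ j, (w j - w' j) * ((w' j)⁻¹ - (w j)⁻¹)
        = A.transpose.mulVec (u - u') ⬝ᵥ (fun j => (w' j)⁻¹ - (w j)⁻¹) := by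
      rw [← h1]; rfl
    rw [h2, Matrix.mulVec_transpose, ← Matrix.dotProduct_mulVec]
    have h3 : A.mulVec (fun j => (w' j)⁻¹ - (w j)⁻¹) = 0 := by
      have : (fun j => (w' j)⁻¹ - (w j)⁻¹)
          = (fun j => (w' j)⁻¹) - (fun j => (w j)⁻¹) := rfl
      rw [this, Matrix.mulVec_sub, hb, hb', sub_self]
    rw [h3, dotProduct_zero]
  have hterm : ∀ j : Fin n, 0 ≤ (w j - w' j) * ((w' j)⁻¹ - (w j)⁻¹) := by
    intro j
    rcases le_total (w j) (w' j) with hle | hle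
    · have h1 : w j - w' j ≤ 0 := by linarith
      have h2 : (w' j)⁻¹ - (w j)⁻¹ ≤ 0 := by
        have := one_div_le_one_div_of_le (hw j) hle
        simp only [one_div] at this
        linarith
      nlinarith [h1, h2]
    · have h1 : 0 ≤ w j - w' j := by linarith
      have h2 : 0 ≤ (w' j)⁻¹ - (w j)⁻¹ := by
        have := one_div_le_one_div_of_le (hw' j) hle
        simp only [one_div] at this
        linarith
      exact mul_nonneg h1 h2
  have hall : ∀ j ∈ Finset.univ, (w j - w' j) * ((w' j)⁻¹ - (w j)⁻¹) = 0 :=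
    (Finset.sum_eq_zero_iff_of_nonneg (fun j _ => hterm j)).1 key
  funext j
  have h := hall j (Finset.mem_univ j)
  rcases lt_trichotomy (w j) (w' j) with hlt | heq | hgt
  · exfalso
    have h1 : w j - w' j < 0 := by linarith
    have h2 : (w' j)⁻¹ - (w j)⁻¹ < 0 := by
      have := one_div_lt_one_div_of_lt (hw j) hlt
      simp only [one_div] at this
      linarith
    exact (mul_pos_of_neg_of_neg h1 h2).ne' h
  · exact heq
  · exfalso
    have h1 : 0 < w j - w' j := by linarith
    have h2 : 0 < (w' j)⁻¹ - (w j)⁻¹ := by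
      have := one_div_lt_one_div_of_lt (hw' j) hgt
      simp only [one_div] at this
      linarith
    exact (mul_pos h1 h2).ne' h

/-- **Existence and uniqueness of the probabilistic barycenter parameters.**
There is a unique vector `w ∈ ℝ^n` with all entries positive, lying in the row span of `A`
(i.e. `w = Aᵀ u` for some `u ∈ ℝ^m`), such that `A (1/w) = b`, i.e. the mean vector
`(1/w_1, …, 1/w_n)` of the product-exponential measure `P_{n,w}` lies in
`K_n = {x ≥ 0 : A x = b}`. -/
theorem exists_unique_barycenter_weights
    (m n : ℕ) (hm : 0 < m) (hmn : m < n)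
    (A : Matrix (Fin m) (Fin n) ℝ) (hApos : ∀ i j, 0 < A i j)
    (hArank : A.rank = m)
    (b : Fin m → ℝ) (hbpos : ∀ i, 0 < b i)
    (hint : ∃ x : Fin n → ℝ, (∀ j, 0 < x j) ∧ A.mulVec x = b) :
    ∃! w : Fin n → ℝ,
      (∀ j, 0 < w j) ∧
      (∃ u : Fin m → ℝ, w = A.transpose.mulVec u) ∧
      A.mulVec (fun j => (w j)⁻¹) = b := by
  obtain ⟨x0, hx0pos, hx0⟩ := hint
  classical
  set K : Set (Fin n → ℝ) := {x | (∀ j, 0 ≤ x j) ∧ A.mulVec x = b} with hKdef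
  have hx0K : x0 ∈ K := ⟨fun j => (hx0pos j).le, hx0⟩
  set i0 : Fin m := ⟨0, hm⟩
  have hmulVec : ∀ (x : Fin n → ℝ) i, A.mulVec x i = ∑ j, A i j * x j := by
    intro x i; simp [Matrix.mulVec, dotProduct]
  -- K compact
  have hKsub : K ⊆ Set.Icc (0 : Fin n → ℝ) (fun j => b i0 / A i0 j) := by
    rintro x ⟨hxn, hxe⟩
    refine ⟨fun j => hxn j, fun j => ?_⟩
    rw [le_div_iff₀ (hApos i0 j)]
    have h1 : A i0 j * x j ≤ ∑ k, A i0 k * x k :=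
      Finset.single_le_sum (f := fun k => A i0 k * x k)
        (fun k _ => mul_nonneg (hApos i0 k).le (hxn k)) (Finset.mem_univ j)
    have h2 : ∑ k, A i0 k * x k = b i0 := by rw [← hmulVec x i0, hxe]
    nlinarith [hApos i0 j, hxn j]
  have hcA : Continuous fun x : Fin n → ℝ => A.mulVec x :=
    A.mulVecLin.continuous_of_finiteDimensional
  have hKclosed : IsClosed K := by
    have : K = (⋂ j, {x : Fin n → ℝ | 0 ≤ x j}) ∩ {x | A.mulVec x = b} := by
      ext x; simp [hKdef, Set.mem_iInter]
    rw [this]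
    exact (isClosed_iInter fun j =>
      isClosed_le continuous_const (continuous_apply j)).inter
      (isClosed_eq hcA continuous_const)
  have hKcompact : IsCompact K := isCompact_Icc.of_isClosed_subset hKclosed hKsub
  -- maximize the product
  have hGc : Continuous fun x : Fin n → ℝ => ∏ j, x j :=
    continuous_finset_prod _ fun j _ => continuous_apply j
  obtain ⟨xs, hxsK, hxsmax⟩ := hKcompact.exists_isMaxOn ⟨x0, hx0K⟩ hGc.continuousOn
  have hx0prod : (0:ℝ) < ∏ k, x0 k := Finset.prod_pos fun k _ => hx0pos k
  have hxsprod : (0:ℝ) < ∏ k, xs k := lt_of_lt_of_le hx0prod (hxsmax hx0K)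
  have hxspos : ∀ j, 0 < xs j := by
    intro j
    rcases (hxsK.1 j).lt_or_eq with h | h
    · exact h
    · exfalso
      rw [Finset.prod_eq_zero (Finset.mem_univ j) h.symm] at hxsprod
      exact lt_irrefl 0 hxsprod
  -- Lagrange condition
  have hker : ∀ v : Fin n → ℝ, A.mulVec v = 0 → ∑ j, v j * (xs j)⁻¹ = 0 := by
    intro v hv
    set h : ℝ → ℝ := fun t => ∑ j, Real.log (xs j + t * v j) with hhdef
    have hderiv : HasDerivAt h (∑ j, v j * (xs j)⁻¹) 0 := by
      have h1 : HasDerivAt h (∑ j, v j / (xs j + 0 * v j)) 0 := by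
        apply HasDerivAt.fun_sum
        intro j _
        have hlin : HasDerivAt (fun t : ℝ => xs j + t * v j) (v j) 0 :=
          (hasDerivAt_mul_const (v j)).const_add (xs j)
        exact hlin.log (by simpa using (hxspos j).ne')
      convert h1 using 1
      refine Finset.sum_congr rfl fun j _ => ?_
      rw [div_eq_mul_inv]
      simp
    have hev : ∀ᶠ t in nhds (0:ℝ), ∀ j, 0 < xs j + t * v j := by
      rw [eventually_all]
      intro j
      have hc : ContinuousAt (fun t : ℝ => xs j + t * v j) 0 := by fun_prop
      have ht : Tendsto (fun t : ℝ => xs j + t * v j) (nhds 0) (nhds (xs j)) := by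
        simpa using hc.tendsto
      exact ht.eventually (eventually_gt_nhds (hxspos j))
    have hmax : IsLocalMax h 0 := by
      filter_upwards [hev] with t ht
      have hxtK : (fun j => xs j + t * v j) ∈ K := by
        refine ⟨fun j => (ht j).le, ?_⟩
        have heq : (fun j => xs j + t * v j) = xs + t • v := by
          funext j; simp [Pi.smul_apply, smul_eq_mul]
        rw [heq, Matrix.mulVec_add, Matrix.mulVec_smul, hv, hxsK.2]
        simp
      have hle : ∏ j, (xs j + t * v j) ≤ ∏ j, xs j := hxsmax hxtK
      have hpos : (0:ℝ) < ∏ j, (xs j + t * v j) :=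
        Finset.prod_pos fun j _ => ht j
      have h1 : h t = Real.log (∏ j, (xs j + t * v j)) :=
        (Real.log_prod fun j _ => (ht j).ne').symm
      have h2 : h 0 = Real.log (∏ j, xs j) := by
        simp only [hhdef, zero_mul, add_zero]
        exact (Real.log_prod fun j _ => (hxspos j).ne').symm
      rw [h1, h2]
      gcongr
    have := hmax.hasDerivAt_eq_zero hderiv
    exact this
  -- orthogonality: (xs)⁻¹ is in the range of Aᵀ
  set c : Fin n → ℝ := fun j => (xs j)⁻¹ with hcdef
  let L : (Fin m → ℝ) →ₗ[ℝ] EuclideanSpace ℝ (Fin n) :=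
    (WithLp.linearEquiv 2 ℝ (Fin n → ℝ)).symm.toLinearMap ∘ₗ (A.transpose).mulVecLin
  set S : Submodule ℝ (EuclideanSpace ℝ (Fin n)) := LinearMap.range L with hSdef
  have hcS : (WithLp.equiv 2 (Fin n → ℝ)).symm c ∈ Sᗮᗮ := by
    rw [Submodule.mem_orthogonal]
    intro q hq
    have hAq : A.mulVec ((WithLp.equiv 2 (Fin n → ℝ)) q) = 0 := by
      funext i
      have hqi := (Submodule.mem_orthogonal S q).1 hq (L (Pi.single i 1))
        (LinearMap.mem_range_self L _)
      have hinner : (inner ℝ (L (Pi.single i 1)) q : ℝ)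
          = A.transpose.mulVec (Pi.single i 1) ⬝ᵥ (WithLp.equiv 2 (Fin n → ℝ)) q := by
        simp [PiLp.inner_apply, RCLike.inner_apply, L, dotProduct,
          Matrix.mulVecLin, WithLp.equiv, WithLp.linearEquiv, Equiv.refl_apply]
        exact Finset.sum_congr rfl fun j _ => mul_comm _ _
      rw [hinner, Matrix.mulVec_transpose, ← Matrix.dotProduct_mulVec,
        single_dotProduct] at hqi
      simpa using hqi
    have hsum := hker ((WithLp.equiv 2 (Fin n → ℝ)) q) hAq
    have : (inner ℝ q ((WithLp.equiv 2 (Fin n → ℝ)).symm c) : ℝ)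
        = ∑ j, ((WithLp.equiv 2 (Fin n → ℝ)) q) j * c j := by
      simp only [PiLp.inner_apply, RCLike.inner_apply, conj_trivial]
      exact Finset.sum_congr rfl fun j _ => mul_comm _ _
    rw [this]
    simpa [hcdef] using hsum
  rw [Submodule.orthogonal_orthogonal] at hcS
  obtain ⟨u, hu⟩ := hcS
  have huc : A.transpose.mulVec u = c := by
    have := congrArg (WithLp.equiv 2 (Fin n → ℝ)) hu
    simpa [L, Matrix.mulVecLin, WithLp.equiv, WithLp.linearEquiv, Matrix.mulVec_transpose] using this
  -- assemble
  refine ⟨c, ⟨fun j => inv_pos.2 (hxspos j), ⟨u, huc.symm⟩, ?_⟩, ?_⟩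
  · have : (fun j => (c j)⁻¹) = xs := by
      funext j; simp [hcdef]
    rw [this, hxsK.2]
  · rintro w' ⟨hw'pos, ⟨u', hu'⟩, hb'⟩
    exact barycenter_uniq A b w' c hw'pos (fun j => inv_pos.2 (hxspos j)) u' u hu'
      huc.symm hb' (by
        have : (fun j => (c j)⁻¹) = xs := by funext j; simp [hcdef]
        rw [this, hxsK.2])
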